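/- Let G and H be arbitrary graphs and D a minimal dominating set of H. Write D^P for the set of vertices of D having a private D-neighbor and D^I = D ∖ D^P. Then Γ(G □ H) ≥ |V(G)|·|D^P| + γ(G)·|D^I|. -/

import Mathlib

open SimpleGraph

variable {V : Type*} {W : Type*}

/-- `D` is a dominating set of `G`: every vertex outside `D` has a neighbor in `D`. -/
def IsDomSet (G : SimpleGraph V) (D : Set V) : Prop :=
  ∀ v ∉ D, ∃ u ∈ D, G.Adj u v

/-- `D` is a minimal dominating set: dominating, and no proper subset is dominating. -/
def IsMinDomSet (G : SimpleGraph V) (D : Set V) : Prop :=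
  IsDomSet G D ∧ ∀ D' ⊂ D, ¬ IsDomSet G D'

/-- The upper domination number `Γ(G)`: maximum size of a minimal dominating set. -/
noncomputable def upperDom (G : SimpleGraph V) : ℕ :=
  sSup {n | ∃ D : Set V, IsMinDomSet G D ∧ D.ncard = n}

/-- The domination number `γ(G)`: minimum size of a dominating set. -/
noncomputable def domNum (G : SimpleGraph V) : ℕ :=
  sInf {n | ∃ D : Set V, IsDomSet G D ∧ D.ncard = n}

/-- The set of vertices of `D` having a private `D`-neighbor. -/
def privSet (G : SimpleGraph V) (D : Set V) : Set V :=
  {v ∈ D | ∃ u, u ∉ D ∧ G.Adj v u ∧ ∀ w ∈ D, G.Adj w u → w = v}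

/-- `I` is an independent set of `G`. -/
def IsIndep (G : SimpleGraph V) (I : Set V) : Prop :=
  ∀ u ∈ I, ∀ v ∈ I, ¬ G.Adj u v

/-- `I` is a maximal independent set of `G`. -/
def IsMaxIndep (G : SimpleGraph V) (I : Set V) : Prop :=
  IsIndep G I ∧ ∀ J, IsIndep G J → I ⊆ J → J = I

/-- The independence number `α(G)`. -/
noncomputable def indepNum (G : SimpleGraph V) : ℕ :=
  sSup {n | ∃ I : Set V, IsIndep G I ∧ I.ncard = n}

/-- The star `K_{1,n}` on `Fin (n+1)` with center `0`. -/
def starGraph (n : ℕ) : SimpleGraph (Fin (n + 1)) :=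
  SimpleGraph.fromRel (fun i _ => i = 0)

/-- The graph `X_n`: two copies of `K_{n+1}` (on `u_0,…,u_n` and `v_0,…,v_n`)
joined by the matching edges `u_i v_i` for `i ≠ 0`. -/
def Xgraph (n : ℕ) : SimpleGraph (Fin (n + 1) ⊕ Fin (n + 1)) :=
  SimpleGraph.fromRel (fun x y => match x, y with
    | .inl _, .inl _ => True
    | .inr _, .inr _ => True
    | .inl i, .inr j => i = j ∧ i ≠ 0
    | _, _ => False)

/-- The graph `X_n'`: `X_n` with `u_0` deleted.  Vertices `inl i` represent
`u_{i+1}` (`i : Fin n`) and `inr j` represent `v_j` (`j : Fin (n+1)`); each side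
induces a complete graph and `u_{i+1}` is matched to `v_{i+1}`. -/
def Xgraph' (n : ℕ) : SimpleGraph (Fin n ⊕ Fin (n + 1)) :=
  SimpleGraph.fromRel (fun x y => match x, y with
    | .inl _, .inl _ => True
    | .inr _, .inr _ => True
    | .inl i, .inr j => (j : ℕ) = (i : ℕ) + 1
    | _, _ => False)

section Aux

lemma exists_minDom_subset {V : Type*} [Fintype V] (G : SimpleGraph V) (T : Set V)
    (hT : IsDomSet G T) : ∃ M, M ⊆ T ∧ IsMinDomSet G M := by
  classical
  set s : Set ℕ := {n | ∃ M, M ⊆ T ∧ IsDomSet G M ∧ M.ncard = n} with hs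
  have hne : s.Nonempty := ⟨T.ncard, T, subset_rfl, hT, rfl⟩
  obtain ⟨M, hMT, hMdom, hMcard⟩ := Nat.sInf_mem hne
  refine ⟨M, hMT, hMdom, ?_⟩
  intro D' hD' hdom'
  have h1 : D'.ncard ∈ s := ⟨D', hD'.subset.trans hMT, hdom', rfl⟩
  have h2 : D'.ncard < M.ncard := Set.ncard_lt_ncard hD' (Set.toFinite M)
  have := Nat.sInf_le h1
  omega

lemma isolated_of_not_priv {W : Type*} (H : SimpleGraph W) (D : Set W)
    (hD : IsMinDomSet H D) {v w : W} (hv : v ∈ D) (hvP : v ∉ privSet H D)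
    (hw : w ∈ D) : ¬ H.Adj w v := by
  intro hadj
  apply hD.2 (D \ {v}) (Set.sdiff_singleton_ssubset.mpr hv)
  intro x hx
  by_cases hxv : x = v
  · subst hxv
    refine ⟨w, ⟨hw, ?_⟩, hadj⟩
    simp only [Set.mem_singleton_iff]
    rintro rfl
    exact H.irrefl hadj
  · have hxD : x ∉ D := fun hxD => hx ⟨hxD, hxv⟩
    obtain ⟨u, huD, huadj⟩ := hD.1 x hxD
    by_cases huv : u = v
    · rw [huv] at huadj
      have hnp : ¬ (x ∉ D ∧ H.Adj v x ∧ ∀ w' ∈ D, H.Adj w' x → w' = v) := by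
        intro hc
        exact hvP ⟨hv, x, hc.1, hc.2.1, hc.2.2⟩
      have : ∃ w' ∈ D, H.Adj w' x ∧ w' ≠ v := by
        by_contra hcon
        push_neg at hcon
        exact hnp ⟨hxD, huadj, fun w' hw' ha => hcon w' hw' ha⟩
      obtain ⟨w', hw'D, hw'adj, hw'v⟩ := this
      exact ⟨w', ⟨hw'D, hw'v⟩, hw'adj⟩
    · exact ⟨u, ⟨huD, huv⟩, huadj⟩

end Aux

theorem stmt_17 [Fintype V] [Fintype W] (G : SimpleGraph V) (H : SimpleGraph W)
    (D : Set W) (hD : IsMinDomSet H D) :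
    upperDom (G.boxProd H) ≥
      Fintype.card V * (privSet H D).ncard + domNum G * (D \ privSet H D).ncard := by
  classical
  set P : Set W := privSet H D with hP
  have hPD : P ⊆ D := fun v hv => hv.1
  -- the big dominating set
  set T : Set (V × W) := Set.univ ×ˢ D with hT
  have hTdom : IsDomSet (G.boxProd H) T := by
    rintro ⟨g, h⟩ hgh
    have hh : h ∉ D := fun hh => hgh ⟨trivial, hh⟩
    obtain ⟨w, hwD, hadj⟩ := hD.1 h hh
    exact ⟨(g, w), ⟨trivial, hwD⟩, Or.inr ⟨hadj, rfl⟩⟩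
  obtain ⟨M, hMT, hMmin⟩ := exists_minDom_subset (G.boxProd H) T hTdom
  have hMdom := hMmin.1
  -- private columns are entirely in M
  have hPsub : (Set.univ ×ˢ P : Set (V × W)) ⊆ M := by
    rintro ⟨g, v⟩ ⟨-, hvP⟩
    obtain ⟨hvD, u, huD, hadj, hpriv⟩ := hvP
    have hguT : ((g, u) : V × W) ∉ T := fun hc => huD hc.2
    have hguM : ((g, u) : V × W) ∉ M := fun hc => hguT (hMT hc)
    obtain ⟨m, hmM, hmadj⟩ := hMdom (g, u) hguM
    obtain ⟨g', w⟩ := m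
    have hmT : ((g', w) : V × W) ∈ T := hMT hmM
    rcases (SimpleGraph.boxProd_adj).mp hmadj with ⟨hgadj, he⟩ | ⟨hhadj, he⟩
    · have he' : w = u := he
      exact absurd (he' ▸ hmT.2) huD
    · have he' : g' = g := he
      have hwv : w = v := hpriv w hmT.2 hhadj
      rw [he', hwv] at hmM
      exact hmM
  -- columns over D \ P contain a dominating set of G
  have hcol : ∀ v ∈ D \ P, IsDomSet G {g | ((g, v) : V × W) ∈ M} := by
    rintro v ⟨hvD, hvP⟩ g hg
    obtain ⟨m, hmM, hmadj⟩ := hMdom (g, v) hg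
    obtain ⟨g', w⟩ := m
    have hmT : ((g', w) : V × W) ∈ T := hMT hmM
    rcases (SimpleGraph.boxProd_adj).mp hmadj with ⟨hgadj, he⟩ | ⟨hhadj, he⟩
    · have he' : w = v := he
      exact ⟨g', by rw [he'] at hmM; exact hmM, hgadj⟩
    · exact absurd hhadj (isolated_of_not_priv H D hD hvD hvP hmT.2)
  have hcolcard : ∀ v ∈ D \ P, domNum G ≤ {g | ((g, v) : V × W) ∈ M}.ncard := by
    intro v hv
    exact Nat.sInf_le ⟨_, hcol v hv, rfl⟩
  -- split M
  have hMsplit : M = (Set.univ ×ˢ P) ∪ (M ∩ Set.univ ×ˢ (D \ P)) := by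
    apply Set.Subset.antisymm
    · rintro ⟨g, v⟩ hm
      have hvD : v ∈ D := (hMT hm).2
      by_cases hvP : v ∈ P
      · exact Or.inl ⟨trivial, hvP⟩
      · exact Or.inr ⟨hm, trivial, hvD, hvP⟩
    · exact Set.union_subset hPsub Set.inter_subset_left
  have hdisj : Disjoint (Set.univ ×ˢ P : Set (V × W)) (M ∩ Set.univ ×ˢ (D \ P)) := by
    rw [Set.disjoint_left]
    rintro ⟨g, v⟩ ⟨-, hvP⟩ ⟨-, -, -, hvP'⟩
    exact hvP' hvP
  have hcard1 : (Set.univ ×ˢ P : Set (V × W)).ncard = Fintype.card V * P.ncard := by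
    rw [Set.ncard_eq_toFinset_card', Set.toFinset_prod, Finset.card_product,
      Set.toFinset_univ, Finset.card_univ, Set.ncard_eq_toFinset_card']
  -- fiberwise count for the second part
  have hcard2 : domNum G * (D \ P).ncard ≤ (M ∩ Set.univ ×ˢ (D \ P)).ncard := by
    set S : Set (V × W) := M ∩ Set.univ ×ˢ (D \ P) with hS
    rw [Set.ncard_eq_toFinset_card' S]
    have hmaps : ∀ x ∈ S.toFinset, Prod.snd x ∈ (D \ P).toFinset := by
      intro x hx
      rw [Set.mem_toFinset] at hx
      rw [Set.mem_toFinset]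
      exact hx.2.2
    rw [Finset.card_eq_sum_card_fiberwise hmaps]
    have hfiber : ∀ v ∈ (D \ P).toFinset,
        domNum G ≤ (S.toFinset.filter (fun a => a.2 = v)).card := by
      intro v hv
      rw [Set.mem_toFinset] at hv
      refine le_trans (hcolcard v hv) ?_
      rw [Set.ncard_eq_toFinset_card']
      apply Finset.card_le_card_of_injOn (fun g => (g, v))
      · intro g hg
        rw [Finset.mem_coe, Set.mem_toFinset] at hg
        exact Finset.mem_filter.mpr ⟨Set.mem_toFinset.mpr ⟨hg, trivial, hv⟩, rfl⟩
      · intro a _ b _ hab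
        exact congrArg Prod.fst hab
    calc domNum G * (D \ P).ncard = (D \ P).toFinset.card • domNum G := by
          rw [Set.ncard_eq_toFinset_card', smul_eq_mul, mul_comm]
      _ ≤ ∑ v ∈ (D \ P).toFinset, (S.toFinset.filter (fun a => a.2 = v)).card :=
          Finset.card_nsmul_le_sum _ _ _ hfiber
  have hMcard : Fintype.card V * P.ncard + domNum G * (D \ P).ncard ≤ M.ncard := by
    rw [hMsplit, Set.ncard_union_eq hdisj (Set.toFinite _) (Set.toFinite _), hcard1]
    exact Nat.add_le_add_left hcard2 _
  -- conclude via sSup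
  have hbdd : BddAbove {n | ∃ D' : Set (V × W), IsMinDomSet (G.boxProd H) D' ∧ D'.ncard = n} := by
    refine ⟨Fintype.card (V × W), ?_⟩
    rintro n ⟨D', -, rfl⟩
    calc D'.ncard ≤ (Set.univ : Set (V × W)).ncard :=
          Set.ncard_le_ncard (Set.subset_univ _) Set.finite_univ
      _ = Fintype.card (V × W) := by rw [Set.ncard_univ, Nat.card_eq_fintype_card]
  have hmem : M.ncard ∈ {n | ∃ D' : Set (V × W), IsMinDomSet (G.boxProd H) D' ∧ D'.ncard = n} :=
    ⟨M, hMmin, rfl⟩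
  exact le_trans hMcard (le_csSup hbdd hmem)
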